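/- arXiv:0804.0674 — 3 statements merged into one kernel-verified Lean document; each statement's English description precedes it below -/
import Mathlib

section
/- If p ∈ U satisfies F³(p) ≠ 0, then the two vectors (F²(p), −F¹(p)) and (Ψ²(p), −Ψ¹(p)) of ℝ² are linearly independent (so the invariant vector fields ξ₁ and ξ₂ built from them are linearly independent at every point of the generic orbit). -/
/- STATEMENT 2: If p ∈ U satisfies F³(p) ≠ 0, then the two vectors (F²(p), −F¹(p)) and
   (Ψ²(p), −Ψ¹(p)) of ℝ² are linearly independent. -/

noncomputable section

/-- Partial derivative with respect to the first variable `x`. -/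
def px (f : ℝ × ℝ → ℝ) (p : ℝ × ℝ) : ℝ := fderiv ℝ f p (1, 0)

/-- Partial derivative with respect to the second variable `y`. -/
def py (f : ℝ × ℝ → ℝ) (p : ℝ × ℝ) : ℝ := fderiv ℝ f p (0, 1)

/-- F¹ = 3a⁰_yy − 2a¹_xy + a²_xx + 3a³a⁰_x − 3a²a⁰_y + 2a¹a¹_y − a¹a²_x − 3a⁰a²_y + 6a⁰a³_x -/
def F1 (a0 a1 a2 a3 : ℝ × ℝ → ℝ) (p : ℝ × ℝ) : ℝ :=
  3 * py (py a0) p - 2 * py (px a1) p + px (px a2) p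
    + 3 * a3 p * px a0 p - 3 * a2 p * py a0 p + 2 * a1 p * py a1 p
    - a1 p * px a2 p - 3 * a0 p * py a2 p + 6 * a0 p * px a3 p

/-- F² = a¹_yy − 2a²_xy + 3a³_xx − 3a⁰a³_y + 3a¹a³_x − 2a²a²_x + a²a¹_y + 3a³a¹_x − 6a³a⁰_y -/
def F2 (a0 a1 a2 a3 : ℝ × ℝ → ℝ) (p : ℝ × ℝ) : ℝ :=
  py (py a1) p - 2 * py (px a2) p + 3 * px (px a3) p
    - 3 * a0 p * py a3 p + 3 * a1 p * px a3 p - 2 * a2 p * px a2 p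
    + a2 p * py a1 p + 3 * a3 p * px a1 p - 6 * a3 p * py a0 p

/-- F³ = F²(F¹F²_x − F²F¹_x) − F¹(F¹F²_y − F²F¹_y)
        + (F¹)³a³ − (F¹)²F²a² + F¹(F²)²a¹ − (F²)³a⁰ -/
def F3 (a0 a1 a2 a3 : ℝ × ℝ → ℝ) (p : ℝ × ℝ) : ℝ :=
  F2 a0 a1 a2 a3 p * (F1 a0 a1 a2 a3 p * px (F2 a0 a1 a2 a3) p
      - F2 a0 a1 a2 a3 p * px (F1 a0 a1 a2 a3) p)
    - F1 a0 a1 a2 a3 p * (F1 a0 a1 a2 a3 p * py (F2 a0 a1 a2 a3) p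
      - F2 a0 a1 a2 a3 p * py (F1 a0 a1 a2 a3) p)
    + (F1 a0 a1 a2 a3 p) ^ 3 * a3 p
    - (F1 a0 a1 a2 a3 p) ^ 2 * F2 a0 a1 a2 a3 p * a2 p
    + F1 a0 a1 a2 a3 p * (F2 a0 a1 a2 a3 p) ^ 2 * a1 p
    - (F2 a0 a1 a2 a3 p) ^ 3 * a0 p

/-- Ψ¹ = −(F¹)²a² + 2F¹F²a¹ − 3(F²)²a⁰ − F¹F¹_y + 4F¹F²_x − 3F¹_xF² -/
def Psi1 (a0 a1 a2 a3 : ℝ × ℝ → ℝ) (p : ℝ × ℝ) : ℝ :=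
  -(F1 a0 a1 a2 a3 p) ^ 2 * a2 p + 2 * F1 a0 a1 a2 a3 p * F2 a0 a1 a2 a3 p * a1 p
    - 3 * (F2 a0 a1 a2 a3 p) ^ 2 * a0 p
    - F1 a0 a1 a2 a3 p * py (F1 a0 a1 a2 a3) p
    + 4 * F1 a0 a1 a2 a3 p * px (F2 a0 a1 a2 a3) p
    - 3 * px (F1 a0 a1 a2 a3) p * F2 a0 a1 a2 a3 p

/-- Ψ² = −3(F¹)²a³ + 2F¹F²a² − (F²)²a¹ + 3F¹F²_y − 4F¹_yF² + F²F²_x -/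
def Psi2 (a0 a1 a2 a3 : ℝ × ℝ → ℝ) (p : ℝ × ℝ) : ℝ :=
  -3 * (F1 a0 a1 a2 a3 p) ^ 2 * a3 p + 2 * F1 a0 a1 a2 a3 p * F2 a0 a1 a2 a3 p * a2 p
    - (F2 a0 a1 a2 a3 p) ^ 2 * a1 p
    + 3 * F1 a0 a1 a2 a3 p * py (F2 a0 a1 a2 a3) p
    - 4 * py (F1 a0 a1 a2 a3) p * F2 a0 a1 a2 a3 p
    + F2 a0 a1 a2 a3 p * px (F2 a0 a1 a2 a3) p


/-- If F³(p) ≠ 0 then (F²(p), −F¹(p)) and (Ψ²(p), −Ψ¹(p)) are linearly independent in ℝ². -/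
theorem stmt2 (U : Set (ℝ × ℝ)) (hU : IsOpen U) (a0 a1 a2 a3 : ℝ × ℝ → ℝ)
    (ha0 : ContDiffOn ℝ (⊤ : ℕ∞) a0 U) (ha1 : ContDiffOn ℝ (⊤ : ℕ∞) a1 U)
    (ha2 : ContDiffOn ℝ (⊤ : ℕ∞) a2 U) (ha3 : ContDiffOn ℝ (⊤ : ℕ∞) a3 U)
    (p : ℝ × ℝ) (hp : p ∈ U) (hF3 : F3 a0 a1 a2 a3 p ≠ 0) :
    LinearIndependent ℝ
      ![((F2 a0 a1 a2 a3 p, -F1 a0 a1 a2 a3 p) : ℝ × ℝ),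
        ((Psi2 a0 a1 a2 a3 p, -Psi1 a0 a1 a2 a3 p) : ℝ × ℝ)] := by
  have hdet : F1 a0 a1 a2 a3 p * Psi2 a0 a1 a2 a3 p
      - F2 a0 a1 a2 a3 p * Psi1 a0 a1 a2 a3 p = -3 * F3 a0 a1 a2 a3 p := by
    simp only [F3, Psi1, Psi2]; ring
  have hdne : F1 a0 a1 a2 a3 p * Psi2 a0 a1 a2 a3 p
      - F2 a0 a1 a2 a3 p * Psi1 a0 a1 a2 a3 p ≠ 0 := by
    rw [hdet]; simpa using hF3
  rw [LinearIndependent.pair_iff]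
  intro s t h
  have h1 : s * F2 a0 a1 a2 a3 p + t * Psi2 a0 a1 a2 a3 p = 0 := congrArg Prod.fst h
  have h2 : s * -F1 a0 a1 a2 a3 p + t * -Psi1 a0 a1 a2 a3 p = 0 := congrArg Prod.snd h
  constructor
  · have : s * (F1 a0 a1 a2 a3 p * Psi2 a0 a1 a2 a3 p
        - F2 a0 a1 a2 a3 p * Psi1 a0 a1 a2 a3 p) = 0 := by
      linear_combination -Psi1 a0 a1 a2 a3 p * h1 - Psi2 a0 a1 a2 a3 p * h2
    exact (mul_eq_zero.mp this).resolve_right hdne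
  · have : t * (F1 a0 a1 a2 a3 p * Psi2 a0 a1 a2 a3 p
        - F2 a0 a1 a2 a3 p * Psi1 a0 a1 a2 a3 p) = 0 := by
      linear_combination F1 a0 a1 a2 a3 p * h1 + F2 a0 a1 a2 a3 p * h2
    exact (mul_eq_zero.mp this).resolve_right hdne

end
end

section
/- Let h^i_{j,k} (i, j, k ∈ {1,2}) be real numbers with h^i_{j,k} = h^i_{k,j}. Define reals h^i_{j₁j₂,k} (symmetric in j₁, j₂) by: h²_{12,2} = h²_{1,2}h¹_{1,2} − h²_{1,1}h¹_{2,2}; h¹_{12,2} = h¹_{2,2}h¹_{1,1} + h²_{2,2}h¹_{1,2} − (h¹_{1,2})² − h²_{1,2}h¹_{2,2}; h²_{12,1} = −h¹_{1,2}h²_{1,1} − (h²_{1,2})² + h¹_{1,1}h²_{1,2} + h²_{1,1}h²_{2,2}; h¹_{12,1} = h²_{1,2}h¹_{1,2} − h²_{1,1}h¹_{2,2}; and for each k ∈ {1,2}: h¹_{11,k} = 2h²_{12,k}, h²_{22,k} = 2h¹_{12,k}, h¹_{22,k} = 0, h²_{11,k} = 0. Then for each i ∈ {1,2}: Σ_k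 ( h^k_{12,1}h^i_{k,2} − h^k_{12,2}h^i_{k,1} + h^k_{1,1}h^i_{k2,2} − h^k_{1,2}h^i_{k2,1} + h^k_{2,1}h^i_{k1,2} − h^k_{2,2}h^i_{k1,1} ) = 0. (This computation shows that the 2-form ω_H is independent of the choice of normalized horizontal subspace H ⊂ A_{θ₂}, i.e., ω_{H̃} − ω_H = 0.) -/
/- STATEMENT 13: independence of the 2-form ω_H of the choice of normalized horizontal
   subspace: with first-order components h^i_{j,k} = `h i j k` (symmetric in j,k) and
   second-order components h^i_{j₁j₂,k} = `h2 i j₁ j₂ k` (symmetric in j₁,j₂) given by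
   the quadratic formulas, the displayed sums vanish. Index `0` stands for 1, `1` for 2. -/

theorem stmt13 (h : Fin 2 → Fin 2 → Fin 2 → ℝ)
    (hsym : ∀ i j k, h i j k = h i k j)
    (h2 : Fin 2 → Fin 2 → Fin 2 → Fin 2 → ℝ)
    (h2sym : ∀ i j k r, h2 i j k r = h2 i k j r)
    -- h²_{12,2} = h²_{1,2}h¹_{1,2} − h²_{1,1}h¹_{2,2}
    (e1 : h2 1 0 1 1 = h 1 0 1 * h 0 0 1 - h 1 0 0 * h 0 1 1)
    -- h¹_{12,2} = h¹_{2,2}h¹_{1,1} + h²_{2,2}h¹_{1,2} − (h¹_{1,2})² − h²_{1,2}h¹_{2,2}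
    (e2 : h2 0 0 1 1 = h 0 1 1 * h 0 0 0 + h 1 1 1 * h 0 0 1
      - h 0 0 1 * h 0 0 1 - h 1 0 1 * h 0 1 1)
    -- h²_{12,1} = −h¹_{1,2}h²_{1,1} − (h²_{1,2})² + h¹_{1,1}h²_{1,2} + h²_{1,1}h²_{2,2}
    (e3 : h2 1 0 1 0 = -(h 0 0 1 * h 1 0 0) - h 1 0 1 * h 1 0 1
      + h 0 0 0 * h 1 0 1 + h 1 0 0 * h 1 1 1)
    -- h¹_{12,1} = h²_{1,2}h¹_{1,2} − h²_{1,1}h¹_{2,2}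
    (e4 : h2 0 0 1 0 = h 1 0 1 * h 0 0 1 - h 1 0 0 * h 0 1 1)
    -- h¹_{11,k} = 2h²_{12,k}, h²_{22,k} = 2h¹_{12,k}, h¹_{22,k} = 0, h²_{11,k} = 0
    (e5 : ∀ k, h2 0 0 0 k = 2 * h2 1 0 1 k)
    (e6 : ∀ k, h2 1 1 1 k = 2 * h2 0 0 1 k)
    (e7 : ∀ k, h2 0 1 1 k = 0)
    (e8 : ∀ k, h2 1 0 0 k = 0) :
    -- Σ_k ( h^k_{12,1}h^i_{k,2} − h^k_{12,2}h^i_{k,1} + h^k_{1,1}h^i_{k2,2}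
    --     − h^k_{1,2}h^i_{k2,1} + h^k_{2,1}h^i_{k1,2} − h^k_{2,2}h^i_{k1,1} ) = 0
    ∀ i, ∑ k, (h2 k 0 1 0 * h i k 1 - h2 k 0 1 1 * h i k 0
      + h k 0 0 * h2 i k 1 1 - h k 0 1 * h2 i k 1 0
      + h k 1 0 * h2 i k 0 1 - h k 1 1 * h2 i k 0 0) = 0 := by
  have sym10 : ∀ a k, h2 a 1 0 k = h2 a 0 1 k := fun a k => h2sym a 1 0 k
  have hs : ∀ a, h a 1 0 = h a 0 1 := fun a => hsym a 1 0
  rw [Fin.forall_fin_two]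
  constructor <;>
    simp only [Fin.sum_univ_two, Fin.isValue, sym10, hs, e1, e2, e3, e4,
      e5, e6, e7, e8] <;> ring
end

section
/- Let F¹ ≠ 0 and F², A₁, A₂, B₁, B₂ be real numbers. Consider the system in unknowns h^i_{j,k} (i, j, k ∈ {1,2}) subject to the symmetry h^i_{j,k} = h^i_{k,j}: 2F¹h¹_{1,1} + F²h²_{1,1} + F¹h²_{1,2} = −A₁; 2F¹h¹_{1,2} + F²h²_{1,2} + F¹h²_{2,2} = −A₂; F²h¹_{1,1} + F¹h¹_{1,2} + 2F²h²_{1,2} = −B₁; F²h¹_{1,2} + F¹h¹_{2,2} + 2F²h²_{2,2} = −B₂. Then for every prescribed pair (h¹_{1,1}, h²_{1,1}) ∈ ℝ² there is exactly one symmetric solution of the system attaining those two values; in particular the solution set is a nonempty 2-dimensional affine subspace. (This is the computation of the first-order components of the horizontal subspaces of A_{θ₃} satisfying the normalization condition, in the case F¹ ≠ 0.) -/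
/- STATEMENT 14: for F¹ ≠ 0, the system
   2F¹h¹_{1,1} + F²h²_{1,1} + F¹h²_{1,2} = −A₁, 2F¹h¹_{1,2} + F²h²_{1,2} + F¹h²_{2,2} = −A₂,
   F²h¹_{1,1} + F¹h¹_{1,2} + 2F²h²_{1,2} = −B₁, F²h¹_{1,2} + F¹h¹_{2,2} + 2F²h²_{2,2} = −B₂
   in the unknowns h^i_{j,k} = `h i j k` (symmetric in j,k; index `0` stands for 1, `1`
   for 2) has, for every prescribed pair (h¹_{1,1}, h²_{1,1}), exactly one symmetric
   solution attaining those two values. -/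

theorem stmt14 (F1 F2 A1 A2 B1 B2 : ℝ) (hF1 : F1 ≠ 0) :
    ∀ a b : ℝ, ∃! h : Fin 2 → Fin 2 → Fin 2 → ℝ,
      (∀ i j k, h i j k = h i k j) ∧
      2 * F1 * h 0 0 0 + F2 * h 1 0 0 + F1 * h 1 0 1 = -A1 ∧
      2 * F1 * h 0 0 1 + F2 * h 1 0 1 + F1 * h 1 1 1 = -A2 ∧
      F2 * h 0 0 0 + F1 * h 0 0 1 + 2 * F2 * h 1 0 1 = -B1 ∧
      F2 * h 0 0 1 + F1 * h 0 1 1 + 2 * F2 * h 1 1 1 = -B2 ∧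
      h 0 0 0 = a ∧ h 1 0 0 = b := by
  intro a b
  set p : ℝ := (-A1 - 2*F1*a - F2*b)/F1 with hp
  set q : ℝ := (-B1 - F2*a - 2*F2*p)/F1 with hq
  set r : ℝ := (-A2 - 2*F1*q - F2*p)/F1 with hr
  set s : ℝ := (-B2 - F2*q - 2*F2*r)/F1 with hs
  have hpF : F1 * p = -A1 - 2*F1*a - F2*b := by rw [hp]; field_simp
  have hqF : F1 * q = -B1 - F2*a - 2*F2*p := by rw [hq]; field_simp
  have hrF : F1 * r = -A2 - 2*F1*q - F2*p := by rw [hr]; field_simp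
  have hsF : F1 * s = -B2 - F2*q - 2*F2*r := by rw [hs]; field_simp
  refine ⟨fun i j k => match i, j, k with
    | 0, 0, 0 => a | 0, 0, 1 => q | 0, 1, 0 => q | 0, 1, 1 => s
    | 1, 0, 0 => b | 1, 0, 1 => p | 1, 1, 0 => p | 1, 1, 1 => r,
    ⟨?_, ?_, ?_, ?_, ?_, rfl, rfl⟩, ?_⟩
  · intro i j k; fin_cases i <;> fin_cases j <;> fin_cases k <;> rfl
  · show 2*F1*a + F2*b + F1*p = -A1; linarith
  · show 2*F1*q + F2*p + F1*r = -A2; linarith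
  · show F2*a + F1*q + 2*F2*p = -B1; linarith
  · show F2*q + F1*s + 2*F2*r = -B2; linarith
  · rintro h ⟨hsym, e1, e2, e3, e4, ha, hb⟩
    have h10 : h 1 0 1 = p := by
      rw [hp]; field_simp; rw [ha, hb] at e1; linarith
    have h01 : h 0 0 1 = q := by
      have := hqF
      rw [ha, h10] at e3
      rw [hq, eq_div_iff hF1]; linarith
    have h11 : h 1 1 1 = r := by
      rw [h01, h10] at e2
      rw [hr, eq_div_iff hF1]; linarith
    have h011 : h 0 1 1 = s := by
      rw [h01, h11] at e4
      rw [hs, eq_div_iff hF1]; linarith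
    funext i j k
    fin_cases i <;> fin_cases j <;> fin_cases k <;>
      simp only [Fin.isValue] <;>
      first
      | exact ha | exact hb | exact h10 | exact h01 | exact h11 | exact h011
      | (rw [hsym]; first | exact ha | exact hb | exact h10 | exact h01 | exact h11 | exact h011)
end
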